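/- Let f : X^m → X satisfy d(f(x),f(y)) ≤ φ(d_m(x,y)) for a nondecreasing φ with φ^(k)(t) → 0 for all t > 0, where X is a complete metric space. Then the map g : X → X defined by g(x) := f(x,...,x) is a Matkowski contraction and hence has a unique fixed point; moreover this fixed point belongs to the attractor A_F of any GIFS F containing f. -/

import Mathlib

open TopologicalSpace Filter

theorem matkowski_lt (φ : ℝ → ℝ) (hmono : MonotoneOn φ (Set.Ici 0))
    (hiter : ∀ t > 0, Tendsto (fun k => φ^[k] t) atTop (nhds 0)) :
    ∀ t > 0, φ t < t := by
  intro t ht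
  by_contra h
  push_neg at h
  have key : ∀ k, t ≤ φ^[k] t := by
    intro k
    induction k with
    | zero => simp
    | succ k ih =>
      rw [Function.iterate_succ_apply']
      exact le_trans h (hmono ht.le (ht.le.trans ih) ih)
  have hev := (hiter t ht).eventually_lt_const ht
  rcases hev.exists with ⟨k, hk⟩
  exact absurd (key k) (not_le.2 hk)

theorem matkowski_aux {X : Type*} [MetricSpace X] [CompleteSpace X]
    (φ : ℝ → ℝ) (hmono : MonotoneOn φ (Set.Ici 0))
    (hnonneg : ∀ t, 0 ≤ t → 0 ≤ φ t)
    (hiter : ∀ t > 0, Tendsto (fun k => φ^[k] t) atTop (nhds 0))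
    (g : X → X) (hg : ∀ x y, dist (g x) (g y) ≤ φ (dist x y))
    (S : Set X) (hS : IsClosed S) (a : X) (ha : a ∈ S) (hmaps : ∀ x ∈ S, g x ∈ S) :
    ∃ p ∈ S, g p = p := by
  have hlt := matkowski_lt φ hmono hiter
  have hφ0 : φ 0 ≤ 0 := by
    by_contra h
    push_neg at h
    exact absurd (hmono (le_refl (0:ℝ)) h.le h.le) (not_le.2 (hlt _ h))
  have hle : ∀ t, 0 ≤ t → φ t ≤ t := by
    intro t ht
    rcases ht.lt_or_eq with h | h
    · exact (hlt t h).le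
    · exact h ▸ hφ0
  have itnn : ∀ k (t : ℝ), 0 ≤ t → 0 ≤ φ^[k] t := by
    intro k
    induction k with
    | zero => intro t ht; simpa using ht
    | succ k ih =>
      intro t ht
      rw [Function.iterate_succ_apply']
      exact hnonneg _ (ih t ht)
  set x : ℕ → X := fun k => g^[k] a with hxdef
  have hx : ∀ k, x (k + 1) = g (x k) := fun k => Function.iterate_succ_apply' g k a
  have hxS : ∀ k, x k ∈ S := by
    intro k
    induction k with
    | zero => exact ha
    | succ k ih => rw [hx]; exact hmaps _ ih
  rcases (dist_nonneg : (0:ℝ) ≤ dist (g a) a).eq_or_lt with hD | hD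
  · exact ⟨a, ha, dist_eq_zero.mp hD.symm⟩
  have hdist : ∀ k, dist (x (k + 1)) (x k) ≤ φ^[k] (dist (g a) a) := by
    intro k
    induction k with
    | zero => simp [hxdef]
    | succ k ih =>
      rw [Function.iterate_succ_apply']
      calc dist (x (k + 2)) (x (k + 1)) = dist (g (x (k + 1))) (g (x k)) := by rw [hx, hx]
        _ ≤ φ (dist (x (k + 1)) (x k)) := hg _ _
        _ ≤ φ (φ^[k] (dist (g a) a)) :=
            hmono dist_nonneg (itnn k _ dist_nonneg) ih
  have hcauchy : CauchySeq x := by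
    rw [Metric.cauchySeq_iff']
    intro ε hε
    have hεφ : 0 < ε - φ ε := sub_pos.2 (hlt ε hε)
    obtain ⟨N, hN⟩ := ((hiter _ hD).eventually_lt_const hεφ).exists
    have claim : ∀ k, dist (x (N + k)) (x N) < ε := by
      intro k
      induction k with
      | zero => simpa using hε
      | succ k ih =>
        calc dist (x (N + (k + 1))) (x N)
            ≤ dist (x (N + k + 1)) (x (N + 1)) + dist (x (N + 1)) (x N) := by
              rw [show N + (k + 1) = N + k + 1 from rfl]; exact dist_triangle _ _ _
          _ ≤ φ (dist (x (N + k)) (x N)) + φ^[N] (dist (g a) a) := by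
              refine add_le_add ?_ (hdist N)
              rw [hx, hx]
              exact hg _ _
          _ ≤ φ ε + φ^[N] (dist (g a) a) :=
              add_le_add_left (hmono dist_nonneg hε.le ih.le) _
          _ < φ ε + (ε - φ ε) := add_lt_add_right hN _
          _ = ε := by ring
    exact ⟨N, fun n hn => by
      obtain ⟨k, rfl⟩ := Nat.exists_eq_add_of_le hn
      exact claim k⟩
  obtain ⟨p, hp⟩ := cauchySeq_tendsto_of_complete hcauchy
  have hpS : p ∈ S := hS.mem_of_tendsto hp (Filter.Eventually.of_forall hxS)
  have h1 : Tendsto (fun n => dist p (x n) + dist (x (n + 1)) p) atTop (nhds 0) := by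
    have t1 : Tendsto (fun n => dist p (x n)) atTop (nhds 0) := by
      simpa using (tendsto_const_nhds : Tendsto (fun _ : ℕ => p) atTop (nhds p)).dist hp
    have t2 : Tendsto (fun n => dist (x (n + 1)) p) atTop (nhds 0) := by
      simpa using (hp.comp (tendsto_add_atTop_nat 1)).dist (tendsto_const_nhds : Tendsto (fun _ : ℕ => p) atTop (nhds p))
    simpa using t1.add t2
  have h2 : ∀ n, dist (g p) p ≤ dist p (x n) + dist (x (n + 1)) p := by
    intro n
    have hstep : dist (g p) (x (n + 1)) ≤ φ (dist p (x n)) := by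
      rw [hx]; exact hg _ _
    calc dist (g p) p ≤ dist (g p) (x (n + 1)) + dist (x (n + 1)) p := dist_triangle _ _ _
      _ ≤ φ (dist p (x n)) + dist (x (n + 1)) p := add_le_add_left hstep _
      _ ≤ dist p (x n) + dist (x (n + 1)) p :=
          add_le_add_left (hle _ dist_nonneg) _
  have hfix : dist (g p) p ≤ 0 := ge_of_tendsto' h1 h2
  exact ⟨p, hpS, dist_le_zero.mp hfix⟩

/-- If `f : X^m → X` is a generalized Matkowski contraction, then the diagonal map
`g(x) := f(x,...,x)` is a Matkowski contraction, hence has a unique fixed point;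
moreover this fixed point belongs to the attractor of any GIFS containing `f`. -/
theorem stmt17 {X : Type*} [MetricSpace X] [CompleteSpace X] [Nonempty X]
    {n m : ℕ}
    (φ : ℝ → ℝ) (hφ_mono : MonotoneOn φ (Set.Ici 0))
    (hφ_nonneg : ∀ t, 0 ≤ t → 0 ≤ φ t)
    (hφ_iter : ∀ t > 0, Tendsto (fun k => φ^[k] t) atTop (nhds 0))
    (f : (Fin m → X) → X)
    (hf : ∀ x y : Fin m → X, dist (f x) (f y) ≤ φ (dist x y))
    (F : Fin n → (Fin m → X) → X) (i₀ : Fin n) (hi₀ : F i₀ = f)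
    (hF : ∀ i, ∀ x y : Fin m → X, dist (F i x) (F i y) ≤ φ (dist x y))
    (A : NonemptyCompacts X)
    (hA : (A : Set X) = ⋃ i, F i '' Set.pi Set.univ (fun _ : Fin m => (A : Set X))) :
    (∃ ψ : ℝ → ℝ, MonotoneOn ψ (Set.Ici 0) ∧ (∀ t, 0 ≤ t → 0 ≤ ψ t) ∧
      (∀ t > 0, Tendsto (fun k => ψ^[k] t) atTop (nhds 0)) ∧
      ∀ x y : X, dist (f (fun _ => x)) (f (fun _ => y)) ≤ ψ (dist x y)) ∧
    ∃ p : X, f (fun _ => p) = p ∧ (∀ q : X, f (fun _ => q) = q → q = p) ∧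
      p ∈ (A : Set X) := by
  have hg : ∀ x y : X, dist (f (fun _ => x)) (f (fun _ => y)) ≤ φ (dist x y) := by
    intro x y
    refine (hf _ _).trans (hφ_mono dist_nonneg dist_nonneg ?_)
    exact (dist_pi_le_iff dist_nonneg).2 fun _ => le_rfl
  have hlt := matkowski_lt φ hφ_mono hφ_iter
  have hmaps : ∀ x ∈ (A : Set X), f (fun _ => x) ∈ (A : Set X) := by
    intro x hx
    rw [hA]
    refine Set.mem_iUnion.2 ⟨i₀, ⟨fun _ => x, fun _ _ => hx, by rw [hi₀]⟩⟩
  obtain ⟨p, hpA, hpfix⟩ := matkowski_aux φ hφ_mono hφ_nonneg hφ_iter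
    (fun x => f (fun _ => x)) hg (A : Set X) A.isCompact.isClosed
    A.nonempty.some A.nonempty.some_mem hmaps
  refine ⟨⟨φ, hφ_mono, hφ_nonneg, hφ_iter, hg⟩, p, hpfix, ?_, hpA⟩
  intro q hq
  by_contra h
  have hd : 0 < dist q p := dist_pos.2 h
  have hle := hg q p
  rw [hq, hpfix] at hle
  exact absurd hle (not_le.2 (hlt _ hd))
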